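/- arXiv:0901.3346 — 2 statements merged into one kernel-verified Lean document; each statement's English description precedes it below -/
import Mathlib

section
/- Let ζ = e^{2πi/5}, F = Q(ζ), O = Z[ζ], and let q : O² → H₂(C) × H₂(C) be the map q(v) = (ι₁(v)ι₁(v)*, ι₂(v)ι₂(v)*), where ι₁, ι₂ are the two non-conjugate complex embeddings of F (sending ζ to ζ and ζ³ respectively) applied componentwise, and w* denotes conjugate transpose. If u, v ∈ O² are primitive vectors (meaning the ideal generated by the two coordinates is all of O), then q(u) = q(v) if and only if u = τv for some root of unity τ ∈ O. -/
noncomputable section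
open Complex ComplexConjugate

/-- A primitive fifth root of unity. -/
def ζ : ℂ := Complex.exp (2 * Real.pi * Complex.I / 5)

/-- The fundamental unit `(1 + √5)/2` of `k = ℚ(√5)`. -/
def u5 : ℂ := (1 + Real.sqrt 5) / 2

/-- The ring of integers `𝒪 = ℤ[ζ₅]` of `F = ℚ(ζ₅)`, as a subalgebra of `ℂ`. -/
def OF : Subalgebra ℤ ℂ := Algebra.adjoin ℤ {ζ}

/-- The ring of integers `𝒪_k = ℤ[(1+√5)/2]` of `k = ℚ(√5)`, as a subalgebra of `ℂ`. -/
def Ok : Subalgebra ℤ ℂ := Algebra.adjoin ℤ {u5}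

/-- The field `F = ℚ(ζ₅)`, as a `ℚ`-subalgebra of `ℂ`. -/
def Fq : Subalgebra ℚ ℂ := Algebra.adjoin ℚ {ζ}

/-- An element of `𝒪_k` is totally positive if every real embedding sends it to a
positive real. -/
def TotPos (x : Ok) : Prop := ∀ f : Ok →+* ℝ, 0 < f x

/-- `ζ` as an element of `𝒪 = ℤ[ζ₅]`. -/
def ζO : OF := ⟨ζ, Algebra.subset_adjoin rfl⟩

lemma zeta_prim : IsPrimitiveRoot ζ 5 := by
  have h := Complex.isPrimitiveRoot_exp 5 (by norm_num)
  have h5 : ((5:ℕ):ℂ) = 5 := by norm_num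
  simpa [ζ, h5] using h

lemma zeta_pow : ζ ^ 5 = 1 := zeta_prim.pow_eq_one

lemma zeta_ne_zero : ζ ≠ 0 := zeta_prim.ne_zero (by norm_num)

lemma abs_zeta : ‖ζ‖ = 1 := by
  rw [ζ, Complex.norm_exp]
  norm_num

lemma conj_zeta : conj ζ = ζ ^ 4 := by
  have h1 : ζ * conj ζ = 1 := by
    rw [Complex.mul_conj, Complex.normSq_eq_norm_sq, abs_zeta]; norm_num
  have h2 : ζ * ζ ^ 4 = 1 := by rw [← pow_succ']; exact zeta_pow
  exact mul_left_cancel₀ zeta_ne_zero (h1.trans h2.symm)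

lemma zeta_intZ : IsIntegral ℤ ζ := zeta_prim.isIntegral (by norm_num)

lemma zeta_intQ : IsIntegral ℚ ζ := zeta_intZ.tower_top

lemma key {u0 u1 v0 v1 a b : ℂ} (hab : a * v0 + b * v1 = 1)
    (h00 : u0 * conj u0 = v0 * conj v0) (h10 : u1 * conj u0 = v1 * conj v0)
    (h11 : u1 * conj u1 = v1 * conj v1) :
    ∃ t : ℂ, t * conj t = 1 ∧ u0 = t * v0 ∧ u1 = t * v1 := by
  by_cases hv0 : v0 = 0
  · subst hv0
    have hu0 : u0 = 0 := by
      rw [Complex.mul_conj, Complex.mul_conj] at h00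
      simpa [Complex.normSq_eq_zero] using h00
    have hv1 : v1 ≠ 0 := by rintro rfl; simp at hab
    have hcv1 : conj v1 ≠ 0 := by simpa using hv1
    refine ⟨u1 / v1, ?_, by simp [hu0], by field_simp⟩
    rw [map_div₀]
    field_simp
    linear_combination h11
  · have hcv0 : conj v0 ≠ 0 := by simpa using hv0
    have hu0 : u0 ≠ 0 := by
      rintro rfl
      rw [Complex.mul_conj, Complex.mul_conj] at h00
      exact hv0 (by have := h00.symm; simpa [Complex.normSq_eq_zero] using this)
    refine ⟨u0 / v0, ?_, by field_simp, ?_⟩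
    · rw [map_div₀]
      field_simp
      linear_combination h00
    · have key2 : u1 * v0 * conj v0 = u0 * v1 * conj v0 := by
        linear_combination u0 * h10 - u1 * h00
      have h3 : u1 * v0 = u0 * v1 := mul_right_cancel₀ hcv0 key2
      field_simp
      linear_combination h3

set_option maxHeartbeats 1000000 in
set_option synthInstance.maxHeartbeats 400000 in
lemma OF_hom_ext {f g : OF →+* ℂ} (h : f ζO = g ζO) : f = g := by
  ext x
  obtain ⟨x, hx⟩ := x
  change x ∈ Algebra.adjoin ℤ {ζ} at hx
  induction hx using Algebra.adjoin_induction with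
  | mem y hy =>
    rcases hy with rfl
    exact h
  | algebraMap r =>
    have e : (⟨algebraMap ℤ ℂ r, algebraMap_mem _ r⟩ : OF) = (r : OF) := by
      apply Subtype.ext; simp
    rw [e, map_intCast, map_intCast]
  | add x y hx hy ihx ihy =>
    have e : (⟨x + y, add_mem hx hy⟩ : OF) = ⟨x, hx⟩ + ⟨y, hy⟩ := rfl
    rw [e, map_add, map_add, ihx, ihy]
  | mul x y hx hy ihx ihy =>
    have e : (⟨x * y, mul_mem hx hy⟩ : OF) = ⟨x, hx⟩ * ⟨y, hy⟩ := rfl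
    rw [e, map_mul, map_mul, ihx, ihy]

lemma abs_eq_one_of_mul_conj {z : ℂ} (h : z * conj z = 1) : ‖z‖ = 1 := by
  have h2 : ‖z‖ ^ 2 = 1 := by
    rw [Complex.sq_norm]
    exact_mod_cast (Complex.mul_conj z).symm.trans h
  nlinarith [norm_nonneg z]

lemma mul_conj_eq_one_of_pow {z : ℂ} {n : ℕ} (hn : 0 < n) (h : z ^ n = 1) :
    z * conj z = 1 := by
  have h1 : ‖z‖ ^ n = 1 := by rw [← norm_pow, h, norm_one]
  have h2 : ‖z‖ = 1 := by
    rcases (pow_eq_one_iff_of_ne_zero hn.ne').mp h1 with h' | ⟨h', -⟩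
    · exact h'
    · nlinarith [norm_nonneg z]
  rw [Complex.mul_conj, Complex.normSq_eq_norm_sq, h2]; norm_num

set_option maxHeartbeats 2000000 in
set_option synthInstance.maxHeartbeats 400000 in
/-- Two primitive vectors `u, v ∈ 𝒪²` satisfy `q(u) = q(v)` (equality of the pairs of
rank-one Hermitian matrices `ι₁(v)ι₁(v)*`, `ι₂(v)ι₂(v)*`, stated entrywise) iff
`u = τ v` for some root of unity `τ ∈ 𝒪`.  Here `ι₁` is the inclusion into `ℂ` and
`ι₂` sends `ζ ↦ ζ³`. -/
theorem stmt_2 (ι₂ : OF →+* ℂ) (hι₂ : ι₂ ζO = ζ ^ 3)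
    (u v : Fin 2 → OF) (hu : IsCoprime (u 0) (u 1)) (hv : IsCoprime (v 0) (v 1)) :
    ((∀ i j, (u i : ℂ) * conj (u j : ℂ) = (v i : ℂ) * conj (v j : ℂ)) ∧
     (∀ i j, ι₂ (u i) * conj (ι₂ (u j)) = ι₂ (v i) * conj (ι₂ (v j)))) ↔
      ∃ τ : OF, (∃ n : ℕ, 0 < n ∧ τ ^ n = 1) ∧ ∀ i, u i = τ * v i := by
  constructor
  · rintro ⟨h1, h2⟩
    obtain ⟨a, b, hab⟩ := hv
    have habC : (a : ℂ) * (v 0 : ℂ) + (b : ℂ) * (v 1 : ℂ) = 1 := by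
      exact_mod_cast congrArg (Subtype.val) hab
    obtain ⟨t, ht, ht0, ht1⟩ := key habC (h1 0 0) (h1 1 0) (h1 1 1)
    have habI : ι₂ a * ι₂ (v 0) + ι₂ b * ι₂ (v 1) = 1 := by
      rw [← map_mul, ← map_mul, ← map_add, hab, map_one]
    obtain ⟨s, hs, hs0, hs1⟩ := key habI (h2 0 0) (h2 1 0) (h2 1 1)
    set τ : OF := a * u 0 + b * u 1 with hτdef
    have hτC : (τ : ℂ) = t := by
      push_cast [hτdef]
      rw [ht0, ht1]
      linear_combination t * habC
    have hτI : ι₂ τ = s := by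
      rw [hτdef, map_add, map_mul, map_mul, hs0, hs1]
      linear_combination s * habI
    have huv : ∀ i, u i = τ * v i := by
      intro i
      apply Subtype.ext
      have e : ((τ * v i : OF) : ℂ) = t * (v i : ℂ) := by push_cast; rw [hτC]
      rw [show ((u i : OF) : ℂ) = (u i : ℂ) from rfl, e]
      fin_cases i
      · exact ht0
      · exact ht1
    -- τ is a root of unity via Kronecker's theorem
    have habsτ : ‖(τ : ℂ)‖ = 1 := abs_eq_one_of_mul_conj (by rw [hτC]; exact ht)
    have habsι : ‖(ι₂ τ)‖ = 1 := abs_eq_one_of_mul_conj (by rw [hτI]; exact hs)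
    set E := IntermediateField.adjoin ℚ {ζ} with hEdef
    haveI : FiniteDimensional ℚ E := IntermediateField.adjoin.finiteDimensional zeta_intQ
    haveI : NumberField E := ⟨⟩
    have hle : OF ≤ Subalgebra.restrictScalars ℤ E.toSubalgebra :=
      Algebra.adjoin_le (by simpa using IntermediateField.mem_adjoin_simple_self ℚ ζ)
    let inc : OF →+* E :=
      { toFun := fun x => ⟨(x : ℂ), hle x.2⟩
        map_one' := rfl
        map_mul' := fun x y => rfl
        map_zero' := rfl
        map_add' := fun x y => rfl }
    have hint : IsIntegral ℤ (inc τ) := by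
      have hτint : IsIntegral ℤ (τ : ℂ) :=
        IsIntegral.of_mem_of_fg OF zeta_intZ.fg_adjoin_singleton _ τ.2
      have hinj : Function.Injective (algebraMap E ℂ) := (algebraMap E ℂ).injective
      exact (isIntegral_algebraMap_iff hinj).mp hτint
    have hnorm : ∀ φ : E →+* ℂ, ‖φ (inc τ)‖ = 1 := by
      intro φ
      have hζ5 : (inc ζO) ^ 5 = 1 := by
        apply Subtype.ext
        show ζ ^ 5 = 1
        exact zeta_pow
      have h5 : (φ (inc ζO)) ^ 5 = 1 := by rw [← map_pow, hζ5, map_one]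
      haveI : NeZero 5 := ⟨by norm_num⟩
      obtain ⟨k, hk5, hkeq⟩ := zeta_prim.eq_pow_of_pow_eq_one h5
      have hcomp : ∀ (ψ : OF →+* ℂ), ψ ζO = ζ ^ k → φ (inc τ) = ψ τ := by
        intro ψ hψ
        have e : φ.comp inc = ψ :=
          OF_hom_ext (by rw [RingHom.comp_apply, ← hkeq, hψ])
        exact RingHom.congr_fun e τ
      interval_cases k
      · exfalso
        have h0 : inc ζO = 1 := φ.injective (by rw [map_one, ← hkeq]; norm_num)
        have : ζ = (1 : ℂ) := congrArg Subtype.val h0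
        exact zeta_prim.ne_one (by norm_num) this
      · rw [hcomp (OF.val : OF →ₐ[ℤ] ℂ).toRingHom (by rw [pow_one]; rfl)]
        exact habsτ
      · rw [hcomp ((starRingEnd ℂ).comp ι₂) ?_]
        · rw [RingHom.comp_apply, Complex.norm_conj]
          exact habsι
        · rw [RingHom.comp_apply, hι₂, map_pow, conj_zeta, ← pow_mul]
          calc (ζ : ℂ) ^ (4 * 3) = ζ ^ 2 * (ζ ^ 5) ^ 2 := by ring
          _ = ζ ^ 2 := by rw [zeta_pow]; ring
      · rw [hcomp ι₂ hι₂]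
        exact habsι
      · rw [hcomp ((starRingEnd ℂ).comp (OF.val : OF →ₐ[ℤ] ℂ).toRingHom) ?_]
        · rw [RingHom.comp_apply, Complex.norm_conj]
          exact habsτ
        · rw [RingHom.comp_apply]
          exact conj_zeta
    obtain ⟨n, hn, hpow⟩ :=
      NumberField.Embeddings.pow_eq_one_of_norm_eq_one E ℂ hint hnorm
    refine ⟨τ, ⟨n, hn, ?_⟩, huv⟩
    have hval := congrArg Subtype.val hpow
    apply Subtype.ext
    show (τ : ℂ) ^ n = 1
    calc ((τ : ℂ)) ^ n = (((inc τ) ^ n : E) : ℂ) := by push_cast; rfl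
    _ = 1 := by rw [hpow]; rfl
  · rintro ⟨τ, ⟨n, hn, hτn⟩, hτ⟩
    have hτC : ((τ : ℂ)) ^ n = 1 := by exact_mod_cast congrArg Subtype.val hτn
    have hτI : (ι₂ τ) ^ n = 1 := by rw [← map_pow, hτn, map_one]
    have h1 := mul_conj_eq_one_of_pow hn hτC
    have h2 := mul_conj_eq_one_of_pow hn hτI
    constructor
    · intro i j
      have hi : (u i : ℂ) = (τ : ℂ) * (v i : ℂ) := by
        exact_mod_cast congrArg Subtype.val (hτ i)
      have hj : (u j : ℂ) = (τ : ℂ) * (v j : ℂ) := by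
        exact_mod_cast congrArg Subtype.val (hτ j)
      rw [hi, hj, map_mul]
      linear_combination ((v i : ℂ) * conj ((v j : ℂ))) * h1
    · intro i j
      have hi : ι₂ (u i) = ι₂ τ * ι₂ (v i) := by rw [hτ i, map_mul]
      have hj : ι₂ (u j) = ι₂ τ * ι₂ (v j) := by rw [hτ j, map_mul]
      rw [hi, hj, map_mul]
      linear_combination (ι₂ (v i) * conj (ι₂ (v j))) * h2
end
end

section
/- Let k = Q(√5) with ring of integers O_k and let η = u² where u = (1+√5)/2 is the fundamental unit. For every totally positive b ∈ O_k there exist α ∈ Z[ζ5] \ {0} and t ∈ O_k with t totally positive or t = 0, such that b = α·ᾱ + t. -/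
set_option maxHeartbeats 1000000
set_option synthInstance.maxHeartbeats 400000
noncomputable section
open Complex ComplexConjugate

-- basic real facts
def φr : ℝ := (1 + Real.sqrt 5) / 2
def φr' : ℝ := (1 - Real.sqrt 5) / 2

lemma s5_sq : Real.sqrt 5 ^ 2 = 5 := Real.sq_sqrt (by norm_num)
lemma s5_gt : 2 < Real.sqrt 5 := by
  nlinarith [s5_sq, Real.sqrt_nonneg 5]
lemma s5_lt : Real.sqrt 5 < 2.5 := by
  nlinarith [s5_sq, Real.sqrt_nonneg 5]
lemma s5_irr : Irrational (Real.sqrt 5) := by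
  have : (5:ℝ) = ((5:ℕ):ℝ) := by norm_num
  rw [this]
  exact (by norm_num : Nat.Prime 5).irrational_sqrt

lemma phi_sq : φr ^ 2 = φr + 1 := by unfold φr; nlinarith [s5_sq]
lemma phi'_sq : φr' ^ 2 = φr' + 1 := by unfold φr'; nlinarith [s5_sq]
lemma phi_mul : φr * φr' = -1 := by unfold φr φr'; nlinarith [s5_sq]
lemma phi_add : φr + φr' = 1 := by unfold φr φr'; ring
lemma phi_gt : 1.5 < φr := by unfold φr; nlinarith [s5_gt]
lemma phi_lt : φr < 1.75 := by unfold φr; nlinarith [s5_lt]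
lemma phi_pos : 0 < φr := by nlinarith [phi_gt]
lemma phi'_neg : φr' < 0 := by unfold φr'; nlinarith [s5_gt]
lemma phi'_gt : -1 < φr' := by unfold φr'; nlinarith [s5_lt]
lemma sub_phi : φr - φr' = Real.sqrt 5 := by unfold φr φr'; ring

lemma u5_eq : u5 = (φr : ℂ) := by unfold u5 φr; push_cast; ring
lemma u5_sq : u5 ^ 2 = u5 + 1 := by
  rw [u5_eq]; norm_cast; exact phi_sq

-- uniqueness of representation
lemma uniq {p q p' q' : ℤ} (h : (p:ℝ) + q * φr = p' + q' * φr) : p = p' ∧ q = q' := by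
  by_cases hq : q = q'
  · subst hq
    constructor
    · have : (p:ℝ) = p' := by linarith
      exact_mod_cast this
    · rfl
  · exfalso
    have hqz : q - q' ≠ 0 := sub_ne_zero.mpr hq
    have hq' : ((q - q' : ℤ) : ℝ) ≠ 0 := Int.cast_ne_zero.mpr hqz
    apply s5_irr
    refine ⟨((2*(p' - p) - (q - q') : ℤ) : ℚ) / ((q - q' : ℤ) : ℚ), ?_⟩
    have hφ : φr = (2 * φr - 1 + 1) / 2 := by ring
    have hs : Real.sqrt 5 = 2 * φr - 1 := by unfold φr; ring
    rw [hs]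
    rw [Rat.cast_div, div_eq_iff (by exact_mod_cast hq' : ((((q - q' : ℤ)) : ℚ) : ℝ) ≠ 0)]
    push_cast
    nlinarith [h]

-- u5 ∈ Ok
lemma u5_mem : u5 ∈ Ok := Algebra.subset_adjoin rfl
def u5k : Ok := ⟨u5, u5_mem⟩

lemma u5k_sq : u5k ^ 2 = u5k + 1 := by
  apply Subtype.ext
  push_cast [u5k]
  exact u5_sq

-- representation: every element of Ok is p + q * u5
lemma rep (x : Ok) : ∃ p q : ℤ, x = (p : Ok) + (q : Ok) * u5k := by
  obtain ⟨x, hx⟩ := x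
  have key : ∀ y ∈ Algebra.adjoin ℤ ({u5} : Set ℂ), ∃ p q : ℤ, y = (p:ℂ) + (q:ℂ) * u5 := by
    intro y hy
    induction hy using Algebra.adjoin_induction with
    | mem z hz =>
      rcases hz with rfl
      exact ⟨0, 1, by push_cast; ring⟩
    | algebraMap r => exact ⟨r, 0, by push_cast; simp [Algebra.algebraMap_eq_smul_one]⟩
    | add a b ha hb iha ihb =>
      obtain ⟨p, q, rfl⟩ := iha
      obtain ⟨r, s, rfl⟩ := ihb
      exact ⟨p + r, q + s, by push_cast; ring⟩
    | mul a b ha hb iha ihb =>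
      obtain ⟨p, q, rfl⟩ := iha
      obtain ⟨r, s, rfl⟩ := ihb
      refine ⟨p * r + q * s, p * s + q * r + q * s, ?_⟩
      push_cast
      linear_combination (q : ℂ) * s * u5_sq
  obtain ⟨p, q, h⟩ := key x hx
  refine ⟨p, q, ?_⟩
  apply Subtype.ext
  push_cast [u5k]
  exact h

lemma coe_rep {x : Ok} {p q : ℤ} (h : x = (p : Ok) + (q : Ok) * u5k) :
    (x : ℂ) = (p : ℂ) + (q : ℂ) * u5 := by
  rw [h]; push_cast [u5k]; ring

lemma real_rep {x : Ok} {p q : ℤ} (h : x = (p : Ok) + (q : Ok) * u5k) :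
    (x : ℂ) = (((p : ℝ) + (q : ℝ) * φr : ℝ) : ℂ) := by
  rw [coe_rep h, u5_eq]; push_cast; ring

lemma im_zero (x : Ok) : (x : ℂ).im = 0 := by
  obtain ⟨p, q, h⟩ := rep x
  rw [real_rep h]
  simp

def sig1 : Ok →+* ℝ where
  toFun x := (x : ℂ).re
  map_one' := by simp
  map_mul' x y := by
    have : ((x * y : Ok) : ℂ) = (x : ℂ) * (y : ℂ) := by push_cast; ring
    simp [this, Complex.mul_re, im_zero]
  map_zero' := by simp
  map_add' x y := by
    have : ((x + y : Ok) : ℂ) = (x : ℂ) + (y : ℂ) := by push_cast; ring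
    simp [this]

lemma sig1_eq {x : Ok} {p q : ℤ} (h : x = (p : Ok) + (q : Ok) * u5k) :
    sig1 x = (p : ℝ) + (q : ℝ) * φr := by
  have := real_rep h
  show (x : ℂ).re = _
  rw [this]
  simp

lemma uniq' {x : Ok} {p q p' q' : ℤ} (h : x = (p : Ok) + (q : Ok) * u5k)
    (h' : x = (p' : Ok) + (q' : Ok) * u5k) : p = p' ∧ q = q' := by
  have e1 := sig1_eq h
  have e2 := sig1_eq h'
  exact uniq (e1 ▸ e2 ▸ rfl : (p:ℝ) + q * φr = (p':ℝ) + q' * φr)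

def pOf (x : Ok) : ℤ := (rep x).choose
def qOf (x : Ok) : ℤ := (rep x).choose_spec.choose
lemma rep_spec (x : Ok) : x = (pOf x : Ok) + (qOf x : Ok) * u5k :=
  (rep x).choose_spec.choose_spec

lemma pq_eq {x : Ok} {p q : ℤ} (h : x = (p : Ok) + (q : Ok) * u5k) :
    pOf x = p ∧ qOf x = q := uniq' (rep_spec x) h

def sig2 : Ok →+* ℝ where
  toFun x := (pOf x : ℝ) + (qOf x : ℝ) * φr'
  map_one' := by
    have h : (1 : Ok) = ((1:ℤ) : Ok) + ((0:ℤ) : Ok) * u5k := by push_cast; ring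
    obtain ⟨hp, hq⟩ := pq_eq h
    show (pOf 1 : ℝ) + (qOf 1 : ℝ) * φr' = 1
    rw [hp, hq]; push_cast; ring
  map_mul' x y := by
    obtain ⟨p, q, hx⟩ := rep x
    obtain ⟨r, s, hy⟩ := rep y
    have hxy : x * y = ((p*r + q*s : ℤ) : Ok) + ((p*s + q*r + q*s : ℤ) : Ok) * u5k := by
      rw [hx, hy]
      have := u5k_sq
      push_cast
      linear_combination ((q:Ok) * s) * u5k_sq
    obtain ⟨hp1, hq1⟩ := pq_eq hxy
    obtain ⟨hp2, hq2⟩ := pq_eq hx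
    obtain ⟨hp3, hq3⟩ := pq_eq hy
    show (pOf (x*y) : ℝ) + (qOf (x*y) : ℝ) * φr' = ((pOf x : ℝ) + (qOf x : ℝ) * φr') * ((pOf y : ℝ) + (qOf y : ℝ) * φr')
    simp only [hp1, hq1, hp2, hq2, hp3, hq3]
    push_cast
    linear_combination (-(q:ℝ) * s) * phi'_sq
  map_zero' := by
    have h : (0 : Ok) = ((0:ℤ) : Ok) + ((0:ℤ) : Ok) * u5k := by push_cast; ring
    obtain ⟨hp, hq⟩ := pq_eq h
    show (pOf 0 : ℝ) + (qOf 0 : ℝ) * φr' = 0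
    rw [hp, hq]; push_cast; ring
  map_add' x y := by
    obtain ⟨p, q, hx⟩ := rep x
    obtain ⟨r, s, hy⟩ := rep y
    have hxy : x + y = ((p + r : ℤ) : Ok) + ((q + s : ℤ) : Ok) * u5k := by
      rw [hx, hy]; push_cast; ring
    obtain ⟨hp1, hq1⟩ := pq_eq hxy
    obtain ⟨hp2, hq2⟩ := pq_eq hx
    obtain ⟨hp3, hq3⟩ := pq_eq hy
    show (pOf (x+y) : ℝ) + (qOf (x+y) : ℝ) * φr' = ((pOf x : ℝ) + (qOf x : ℝ) * φr') + ((pOf y : ℝ) + (qOf y : ℝ) * φr')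
    simp only [hp1, hq1, hp2, hq2, hp3, hq3]
    push_cast
    ring

lemma sig2_eq {x : Ok} {p q : ℤ} (h : x = (p : Ok) + (q : Ok) * u5k) :
    sig2 x = (p : ℝ) + (q : ℝ) * φr' := by
  obtain ⟨hp, hq⟩ := pq_eq h
  show (pOf x : ℝ) + (qOf x : ℝ) * φr' = _
  rw [hp, hq]

lemma sig1_u5k : sig1 u5k = φr := by
  have h : u5k = ((0:ℤ) : Ok) + ((1:ℤ) : Ok) * u5k := by push_cast; ring
  rw [sig1_eq h]; push_cast; ring

lemma sig2_u5k : sig2 u5k = φr' := by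
  have h : u5k = ((0:ℤ) : Ok) + ((1:ℤ) : Ok) * u5k := by push_cast; ring
  rw [sig2_eq h]; push_cast; ring

-- every ring hom Ok →+* ℝ is sig1 or sig2
lemma hom_eq (f : Ok →+* ℝ) : f = sig1 ∨ f = sig2 := by
  have hroot : f u5k ^ 2 = f u5k + 1 := by
    rw [← map_pow f, u5k_sq, map_add f, map_one f]
  have : (f u5k - φr) * (f u5k - φr') = 0 := by
    have h1 := phi_add
    have h2 := phi_mul
    nlinarith [hroot]
  rcases mul_eq_zero.mp this with h | h
  · left
    ext x
    obtain ⟨p, q, hx⟩ := rep x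
    have e := sig1_eq (rfl : ((p:Ok) + (q:Ok) * u5k : Ok) = (p:Ok) + (q:Ok) * u5k)
    rw [hx, e, map_add f, map_mul f, map_intCast f, map_intCast f, sub_eq_zero.mp h]
  · right
    ext x
    obtain ⟨p, q, hx⟩ := rep x
    have e := sig2_eq (rfl : ((p:Ok) + (q:Ok) * u5k : Ok) = (p:Ok) + (q:Ok) * u5k)
    rw [hx, e, map_add f, map_mul f, map_intCast f, map_intCast f, sub_eq_zero.mp h]

-- units
lemma u5k_unit_rel : u5k * (u5k - 1) = 1 := by
  have := u5k_sq
  linear_combination u5k_sq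

def Uk : Okˣ := Units.mkOfMulEqOne u5k (u5k - 1) u5k_unit_rel

lemma Uk_val : (Uk : Ok) = u5k := rfl

lemma phir_unit_rel : φr * (φr - 1) = 1 := by linear_combination phi_sq
lemma phir'_unit_rel : φr' * (φr' - 1) = 1 := by linear_combination phi'_sq
lemma phir_ne : φr ≠ 0 := ne_of_gt phi_pos
lemma phir'_ne : φr' ≠ 0 := ne_of_lt phi'_neg

def φu : ℝˣ := Units.mkOfMulEqOne φr (φr - 1) phir_unit_rel
def φu' : ℝˣ := Units.mkOfMulEqOne φr' (φr' - 1) phir'_unit_rel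

-- the inclusion Ok →+* ℂ
def ι : Ok →+* ℂ := (Subalgebra.val Ok).toRingHom

lemma ι_apply (x : Ok) : ι x = (x : ℂ) := rfl

-- complex-unit of φr
def φc : ℂˣ := Units.map Complex.ofRealHom.toMonoidHom φu

lemma zpow_val_Uk_sig1 (m : ℤ) : sig1 ((Uk ^ m : Okˣ) : Ok) = φr ^ m := by
  have h : Units.map (sig1 : Ok →+* ℝ).toMonoidHom Uk = φu := by
    apply Units.ext
    show sig1 u5k = φr
    exact sig1_u5k
  calc sig1 ((Uk ^ m : Okˣ) : Ok)
      = ((Units.map (sig1 : Ok →+* ℝ).toMonoidHom (Uk ^ m) : ℝˣ) : ℝ) := rfl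
    _ = (((Units.map (sig1 : Ok →+* ℝ).toMonoidHom Uk) ^ m : ℝˣ) : ℝ) := by rw [map_zpow]
    _ = ((φu ^ m : ℝˣ) : ℝ) := by rw [h]
    _ = (φu : ℝ) ^ m := Units.val_zpow_eq_zpow_val φu m
    _ = φr ^ m := rfl

lemma zpow_val_Uk_sig2 (m : ℤ) : sig2 ((Uk ^ m : Okˣ) : Ok) = φr' ^ m := by
  have h : Units.map (sig2 : Ok →+* ℝ).toMonoidHom Uk = φu' := by
    apply Units.ext
    show sig2 u5k = φr'
    exact sig2_u5k
  calc sig2 ((Uk ^ m : Okˣ) : Ok)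
      = ((Units.map (sig2 : Ok →+* ℝ).toMonoidHom (Uk ^ m) : ℝˣ) : ℝ) := rfl
    _ = (((Units.map (sig2 : Ok →+* ℝ).toMonoidHom Uk) ^ m : ℝˣ) : ℝ) := by rw [map_zpow]
    _ = ((φu' ^ m : ℝˣ) : ℝ) := by rw [h]
    _ = (φu' : ℝ) ^ m := Units.val_zpow_eq_zpow_val φu' m
    _ = φr' ^ m := rfl

lemma zpow_val_Uk_coe (m : ℤ) : (((Uk ^ m : Okˣ) : Ok) : ℂ) = ((φr ^ m : ℝ) : ℂ) := by
  have h : Units.map ι.toMonoidHom Uk = φc := by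
    apply Units.ext
    simp only [Units.coe_map, φc, MonoidHom.coe_coe]
    exact u5_eq
  calc (((Uk ^ m : Okˣ) : Ok) : ℂ)
      = ((Units.map ι.toMonoidHom (Uk ^ m) : ℂˣ) : ℂ) := rfl
    _ = (((Units.map ι.toMonoidHom Uk) ^ m : ℂˣ) : ℂ) := by rw [map_zpow]
    _ = ((φc ^ m : ℂˣ) : ℂ) := by rw [h]
    _ = (φc : ℂ) ^ m := Units.val_zpow_eq_zpow_val φc m
    _ = ((φr : ℝ) : ℂ) ^ m := rfl
    _ = ((φr ^ m : ℝ) : ℂ) := by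
        rw [← Complex.ofReal_zpow]

-- the norm
def Nm (x : Ok) : ℝ := sig1 x * sig2 x

lemma Nm_mul (x y : Ok) : Nm (x * y) = Nm x * Nm y := by
  unfold Nm; rw [map_mul, map_mul]; ring

lemma Nm_eq {x : Ok} {p q : ℤ} (h : x = (p : Ok) + (q : Ok) * u5k) :
    Nm x = ((p^2 + p*q - q^2 : ℤ) : ℝ) := by
  unfold Nm
  rw [sig1_eq h, sig2_eq h]
  push_cast
  linear_combination ((q:ℝ)^2) * phi_mul + ((p:ℝ)*q) * phi_add

lemma Nm_Uk (m : ℤ) : Nm ((Uk ^ m : Okˣ) : Ok) = (-1 : ℝ) ^ m := by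
  unfold Nm
  rw [zpow_val_Uk_sig1, zpow_val_Uk_sig2, ← mul_zpow, phi_mul]

-- the key sub-lemma for the unit case
lemma unit_is_one {x : Ok} (hN : Nm x = 1 ∨ Nm x = -1)
    (h1 : 1 ≤ sig1 x) (h2 : sig1 x < φr) : x = 1 := by
  have hrep := rep_spec x
  set p := pOf x with hp
  set q := qOf x with hq
  have s1 : sig1 x = (p : ℝ) + (q : ℝ) * φr := sig1_eq hrep
  have s2 : sig2 x = (p : ℝ) + (q : ℝ) * φr' := sig2_eq hrep
  have hs2ub : sig2 x ≤ 1 ∧ -1 ≤ sig2 x := by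
    rcases hN with hN | hN <;> unfold Nm at hN <;>
      constructor <;> nlinarith [h1, h2, phi_gt]
  -- q ∈ {0, 1}
  have hs5 : (0:ℝ) < Real.sqrt 5 := by nlinarith [s5_gt]
  have hqr : (q : ℝ) * Real.sqrt 5 = sig1 x - sig2 x := by
    rw [s1, s2, ← sub_phi]; ring
  have hq0 : (0 : ℤ) ≤ q := by
    have : (0:ℝ) ≤ (q:ℝ) * Real.sqrt 5 := by rw [hqr]; linarith [hs2ub.1]
    have hq : (0:ℝ) ≤ (q:ℝ) := by
      by_contra hc
      push_neg at hc
      nlinarith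
    exact_mod_cast hq
  have hq1 : (q : ℤ) ≤ 1 := by
    have h5 : (q:ℝ) * Real.sqrt 5 < 2 * Real.sqrt 5 := by
      rw [hqr]
      nlinarith [hs2ub.2, h2, phi_lt, s5_gt]
    have : (q:ℝ) < 2 := lt_of_mul_lt_mul_right (by linarith [h5]) (le_of_lt hs5)
    have : q < 2 := by exact_mod_cast this
    omega
  interval_cases q
  · -- q = 0 : x = p, p = 1
    have hp1 : (1:ℝ) ≤ (p:ℝ) := by rw [s1] at h1; push_cast at h1 ⊢; linarith
    have hp2 : (p:ℝ) < 2 := by rw [s1] at h2; push_cast at h2 ⊢; nlinarith [phi_lt]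
    have : p = 1 := by
      have a : (1:ℤ) ≤ p := by exact_mod_cast hp1
      have b : p < 2 := by exact_mod_cast hp2
      omega
    rw [hrep, this]
    push_cast
    ring
  · -- q = 1 : impossible
    exfalso
    have ha : (1:ℝ) ≤ (p:ℝ) + φr := by rw [s1] at h1; push_cast at h1; linarith
    have hb : (p:ℝ) + φr < φr := by rw [s1] at h2; push_cast at h2; linarith
    have hpneg : (p:ℝ) < 0 := by linarith
    have hpge : (-1:ℝ) < (p:ℝ) := by nlinarith [phi_lt]
    have c1 : p < 0 := by exact_mod_cast hpneg
    have c2 : (-1:ℤ) < p := by exact_mod_cast hpge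
    omega

-- integer in an open interval of length > 1
lemma int_in_interval {a c : ℝ} (h : a + 1 < c) : ∃ m : ℤ, a < (m:ℝ) ∧ (m:ℝ) < c :=
  ⟨⌊a⌋ + 1, by push_cast; linarith [Int.lt_floor_add_one a], by
    push_cast; linarith [Int.floor_le a]⟩

-- selection of the exponent in the main case
lemma select_m {B₁ B₂ : ℝ} (h1 : 0 < B₁) (h2 : 0 < B₂) (h4 : 4 ≤ B₁ * B₂) :
    ∃ m : ℤ, (φr ^ 2) ^ m < B₁ ∧ (φr ^ 2) ^ (-m) < B₂ := by
  set θ := φr ^ 2 with hθ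
  have hθ1 : 1 < θ := by rw [hθ]; nlinarith [phi_gt]
  have hθ0 : 0 < θ := by linarith
  have hθ4 : θ < 4 := by rw [hθ]; nlinarith [phi_lt, phi_gt]
  have hL : 0 < Real.log θ := Real.log_pos hθ1
  have hiv : (-Real.log B₂) / Real.log θ + 1 < Real.log B₁ / Real.log θ := by
    rw [div_add' _ _ _ (ne_of_gt hL), div_lt_div_iff₀ hL hL]
    have : Real.log θ < Real.log (B₁ * B₂) := by
      apply Real.log_lt_log hθ0
      linarith
    rw [Real.log_mul (ne_of_gt h1) (ne_of_gt h2)] at this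
    nlinarith [hL]
  obtain ⟨m, hma, hmc⟩ := int_in_interval hiv
  have hmc' : (m:ℝ) * Real.log θ < Real.log B₁ := (lt_div_iff₀ hL).mp hmc
  have hma' : -Real.log B₂ < (m:ℝ) * Real.log θ := (div_lt_iff₀ hL).mp hma
  refine ⟨m, ?_, ?_⟩
  · have hpos : (0:ℝ) < θ ^ m := zpow_pos hθ0 m
    rw [← Real.log_lt_log_iff hpos h1, Real.log_zpow]
    exact hmc'
  · have hpos : (0:ℝ) < θ ^ (-m) := zpow_pos hθ0 (-m)
    rw [← Real.log_lt_log_iff hpos h2, Real.log_zpow]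
    push_cast
    nlinarith
lemma zeta_eq : ζ = Complex.exp (((2 * Real.pi / 5 : ℝ) : ℂ) * Complex.I) := by
  unfold ζ; push_cast; ring_nf

lemma zeta4_eq : ζ ^ 4 = Complex.exp (((-(2 * Real.pi / 5) : ℝ) : ℂ) * Complex.I) := by
  unfold ζ
  rw [← Complex.exp_nat_mul]
  rw [show ((-(2 * Real.pi / 5) : ℝ) : ℂ) * Complex.I
      = (4 : ℕ) * (2 * Real.pi * Complex.I / 5) - 2 * Real.pi * Complex.I by push_cast; ring]
  rw [Complex.exp_sub, Complex.exp_two_pi_mul_I]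
  ring

lemma cos25 : Real.cos (2 * Real.pi / 5) = (Real.sqrt 5 - 1) / 4 := by
  have h : 2 * Real.pi / 5 = 2 * (Real.pi / 5) := by ring
  rw [h, Real.cos_two_mul, Real.cos_pi_div_five]
  have : Real.sqrt 5 ^ 2 = 5 := Real.sq_sqrt (by norm_num)
  nlinarith [this]

lemma zeta_sum : ζ + ζ ^ 4 = ((Real.sqrt 5 - 1) / 2 : ℝ) := by
  rw [zeta4_eq, zeta_eq, Complex.exp_mul_I, Complex.exp_mul_I]
  rw [← Complex.ofReal_cos, ← Complex.ofReal_sin, ← Complex.ofReal_cos, ← Complex.ofReal_sin]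
  rw [Real.cos_neg, Real.sin_neg, cos25]
  push_cast
  ring

lemma u5_mem_OF : u5 ∈ OF := by
  have hz : ζ ∈ OF := Algebra.subset_adjoin rfl
  have h1 : (1 : ℂ) + (ζ + ζ ^ 4) ∈ OF :=
    add_mem (one_mem OF) (add_mem hz (pow_mem hz 4))
  have he : u5 = 1 + (ζ + ζ ^ 4) := by
    rw [zeta_sum]
    unfold u5
    push_cast
    ring
  rw [he]
  exact h1

def u5F : OF := ⟨u5, u5_mem_OF⟩

lemma u5F_sq : u5F ^ 2 = u5F + 1 := by
  apply Subtype.ext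
  push_cast [u5F]
  exact u5_sq

lemma u5F_unit_rel : u5F * (u5F - 1) = 1 := by linear_combination u5F_sq

def UF : OFˣ := Units.mkOfMulEqOne u5F (u5F - 1) u5F_unit_rel

def ιF : OF →+* ℂ := (Subalgebra.val OF).toRingHom

lemma zpow_val_UF_coe (m : ℤ) : (((UF ^ m : OFˣ) : OF) : ℂ) = ((φr ^ m : ℝ) : ℂ) := by
  have h : Units.map ιF.toMonoidHom UF = φc := by
    apply Units.ext
    simp only [Units.coe_map, φc, MonoidHom.coe_coe]
    exact u5_eq
  calc (((UF ^ m : OFˣ) : OF) : ℂ)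
      = ((Units.map ιF.toMonoidHom (UF ^ m) : ℂˣ) : ℂ) := rfl
    _ = (((Units.map ιF.toMonoidHom UF) ^ m : ℂˣ) : ℂ) := by rw [map_zpow]
    _ = ((φc ^ m : ℂˣ) : ℂ) := by rw [h]
    _ = (φc : ℂ) ^ m := Units.val_zpow_eq_zpow_val φc m
    _ = ((φr : ℝ) : ℂ) ^ m := rfl
    _ = ((φr ^ m : ℝ) : ℂ) := by rw [← Complex.ofReal_zpow]

-- η-power helper lemmas
lemma zpow_two_mul' (a : ℝ) (m : ℤ) : a ^ (2*m) = (a^2) ^ m := by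
  rw [zpow_mul]; norm_cast

lemma eta_sig1 (m : ℤ) : sig1 ((Uk ^ (2*m) : Okˣ) : Ok) = (φr ^ 2) ^ m := by
  rw [zpow_val_Uk_sig1, zpow_two_mul']

lemma phi'_sq_inv : φr' ^ 2 = (φr ^ 2)⁻¹ := by
  have h : (φr * φr') ^ 2 = 1 := by rw [phi_mul]; norm_num
  have hne : φr ^ 2 ≠ 0 := pow_ne_zero 2 phir_ne
  field_simp
  rw [eq_div_iff hne]; linear_combination h

lemma eta_sig2 (m : ℤ) : sig2 ((Uk ^ (2*m) : Okˣ) : Ok) = (φr ^ 2) ^ (-m) := by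
  rw [zpow_val_Uk_sig2, zpow_two_mul', phi'_sq_inv, inv_zpow, ← zpow_neg]

lemma eta_coe (m : ℤ) : (((Uk ^ (2*m) : Okˣ) : Ok) : ℂ) = (((φr ^ 2) ^ m : ℝ) : ℂ) := by
  rw [zpow_val_Uk_coe, zpow_two_mul']

lemma alpha_sq (m : ℤ) : ((φr ^ m : ℝ) : ℂ) * ((φr ^ m : ℝ) : ℂ) = (((φr ^ 2) ^ m : ℝ) : ℂ) := by
  rw [← Complex.ofReal_mul, ← zpow_add₀ phir_ne, show m + m = 2*m by ring, zpow_two_mul']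

lemma alpha_ne (m : ℤ) : ((UF ^ m : OFˣ) : OF) ≠ 0 := by
  intro h
  have h2 : (((UF ^ m : OFˣ) : OF) : ℂ) = 0 := by rw [h]; rfl
  rw [zpow_val_UF_coe] at h2
  have : (φr : ℝ) ^ m ≠ 0 := zpow_ne_zero m phir_ne
  exact this (by exact_mod_cast h2)

-- exclusion of norms 2 and 3 mod 5
lemma not_norm_23 (p q : ℤ) : p^2 + p*q - q^2 ≠ 2 ∧ p^2 + p*q - q^2 ≠ 3 := by
  have key : ∀ a b : ZMod 5, a^2 + a*b - b^2 ≠ 2 ∧ a^2 + a*b - b^2 ≠ 3 := by decide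
  constructor <;> intro h <;>
  · have := congrArg (fun n : ℤ => (n : ZMod 5)) h
    push_cast at this
    first
    | exact (key p q).1 this
    | exact (key p q).2 this

/-- Every totally positive `b ∈ 𝒪_k` can be written as `b = α·ᾱ + t` with
`α ∈ 𝒪 ∖ {0}` and `t ∈ 𝒪_k` totally positive or zero. -/
theorem stmt_8 (b : Ok) (hb : TotPos b) :
    ∃ α : OF, α ≠ 0 ∧ ∃ t : Ok, (TotPos t ∨ t = 0) ∧
      (b : ℂ) = (α : ℂ) * conj (α : ℂ) + (t : ℂ) := by
  have hB1 : 0 < sig1 b := hb sig1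
  have hB2 : 0 < sig2 b := hb sig2
  have hrep := rep_spec b
  have hNm : Nm b = ((pOf b ^ 2 + pOf b * qOf b - qOf b ^ 2 : ℤ) : ℝ) := Nm_eq hrep
  set N : ℤ := pOf b ^ 2 + pOf b * qOf b - qOf b ^ 2 with hN
  have hNpos : 0 < N := by
    have h0 : (0:ℝ) < (N:ℝ) := by rw [← hNm]; exact mul_pos hB1 hB2
    exact_mod_cast h0
  by_cases hN1 : N = 1
  · -- unit case : b = η^k, take t = 0
    have hNmb : Nm b = 1 := by rw [hNm, hN1]; norm_num
    have hφ1 : (1:ℝ) < φr := by nlinarith [phi_gt]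
    have hL : 0 < Real.log φr := Real.log_pos hφ1
    set m₀ : ℤ := ⌊Real.log (sig1 b) / Real.log φr⌋ with hm₀
    have hfl1 : (m₀:ℝ) ≤ Real.log (sig1 b) / Real.log φr := Int.floor_le _
    have hfl2 : Real.log (sig1 b) / Real.log φr < (m₀:ℝ) + 1 := Int.lt_floor_add_one _
    have hlow : φr ^ m₀ ≤ sig1 b := by
      have h' : (m₀:ℝ) * Real.log φr ≤ Real.log (sig1 b) := by
        rw [← le_div_iff₀ hL]; exact hfl1
      have hpos : (0:ℝ) < φr ^ m₀ := zpow_pos phi_pos m₀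
      rw [← Real.log_le_log_iff hpos hB1, Real.log_zpow]
      exact h'
    have hhigh : sig1 b < φr ^ (m₀ + 1) := by
      have h' : Real.log (sig1 b) < ((m₀:ℝ) + 1) * Real.log φr := by
        rw [← div_lt_iff₀ hL]; exact hfl2
      have hpos : (0:ℝ) < φr ^ (m₀ + 1) := zpow_pos phi_pos _
      rw [← Real.log_lt_log_iff hB1 hpos, Real.log_zpow]
      push_cast
      exact h'
    set w : Ok := b * ((Uk ^ (-m₀) : Okˣ) : Ok) with hw
    have hs1w : sig1 w = sig1 b * φr ^ (-m₀) := by rw [hw, map_mul, zpow_val_Uk_sig1]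
    have hinv : φr ^ m₀ * φr ^ (-m₀) = 1 := by rw [← zpow_add₀ phir_ne]; simp
    have hwpos : (0:ℝ) < φr ^ (-m₀) := zpow_pos phi_pos _
    have h1w : 1 ≤ sig1 w := by
      rw [hs1w]
      calc (1:ℝ) = φr ^ m₀ * φr ^ (-m₀) := hinv.symm
        _ ≤ sig1 b * φr ^ (-m₀) := mul_le_mul_of_nonneg_right hlow (le_of_lt hwpos)
    have h2w : sig1 w < φr := by
      rw [hs1w]
      calc sig1 b * φr ^ (-m₀) < φr ^ (m₀ + 1) * φr ^ (-m₀) :=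
            mul_lt_mul_of_pos_right hhigh hwpos
        _ = φr := by rw [← zpow_add₀ phir_ne]; simp
    have hNw : Nm w = 1 ∨ Nm w = -1 := by
      have hmul : Nm w = Nm b * Nm ((Uk ^ (-m₀) : Okˣ) : Ok) := Nm_mul _ _
      rw [hNmb, one_mul, Nm_Uk] at hmul
      rcases Int.even_or_odd (-m₀) with ⟨k, hk⟩ | ⟨k, hk⟩
      · left
        rw [hmul, hk, show k + k = 2 * k by ring, zpow_two_mul']
        norm_num
      · right
        rw [hmul, hk, zpow_add₀ (by norm_num : (-1:ℝ) ≠ 0), zpow_two_mul']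
        norm_num
    have hw1 : w = 1 := unit_is_one hNw h1w h2w
    have hu : ((Uk ^ (-m₀) : Okˣ) : Ok) * ((Uk ^ m₀ : Okˣ) : Ok) = 1 := by
      rw [← Units.val_mul, ← zpow_add]
      norm_num
    have hb_eq : b = ((Uk ^ m₀ : Okˣ) : Ok) := by
      calc b = b * (((Uk ^ (-m₀) : Okˣ) : Ok) * ((Uk ^ m₀ : Okˣ) : Ok)) := by
            rw [hu, mul_one]
        _ = w * ((Uk ^ m₀ : Okˣ) : Ok) := by rw [hw, mul_assoc]
        _ = ((Uk ^ m₀ : Okˣ) : Ok) := by rw [hw1, one_mul]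
    have hpar : (-1:ℝ) ^ m₀ = 1 := by rw [← Nm_Uk m₀, ← hb_eq, hNmb]
    have heven : Even m₀ := by
      rcases Int.even_or_odd m₀ with he | ⟨k, hk⟩
      · exact he
      · exfalso
        rw [hk, zpow_add₀ (by norm_num : (-1:ℝ) ≠ 0), zpow_two_mul'] at hpar
        norm_num at hpar
    obtain ⟨k, hk⟩ := heven
    have hm2k : m₀ = 2 * k := by omega
    refine ⟨((UF ^ k : OFˣ) : OF), alpha_ne k, 0, Or.inr rfl, ?_⟩
    have hbC : (b : ℂ) = (((φr ^ 2) ^ k : ℝ) : ℂ) := by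
      rw [hb_eq, hm2k]
      exact eta_coe k
    rw [hbC, zpow_val_UF_coe, Complex.conj_ofReal, alpha_sq]
    push_cast
    ring
  · -- main case : N ≥ 4
    have hN4 : 4 ≤ N := by
      have h23 := not_norm_23 (pOf b) (qOf b)
      omega
    have h4 : (4:ℝ) ≤ sig1 b * sig2 b := by
      have e1 : sig1 b * sig2 b = ((N:ℤ):ℝ) := hNm
      rw [e1]
      exact_mod_cast hN4
    obtain ⟨m, hm1, hm2⟩ := select_m hB1 hB2 h4
    set e : Ok := ((Uk ^ (2*m) : Okˣ) : Ok) with he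
    refine ⟨((UF ^ m : OFˣ) : OF), alpha_ne m, b - e, Or.inl ?_, ?_⟩
    · intro f
      rcases hom_eq f with rfl | rfl
      · rw [map_sub, he, eta_sig1]
        linarith [hm1]
      · rw [map_sub, he, eta_sig2]
        linarith [hm2]
    · have hsub : ((b - e : Ok) : ℂ) = (b : ℂ) - (((φr ^ 2) ^ m : ℝ) : ℂ) := by
        have : ((b - e : Ok) : ℂ) = (b : ℂ) - (e : ℂ) := by push_cast; ring
        rw [this, he, eta_coe]
      rw [hsub, zpow_val_UF_coe, Complex.conj_ofReal, alpha_sq]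
      ring
end
end
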